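/- arXiv:2202.11517 — 2 statements merged into one kernel-verified Lean document; each statement's English description precedes it below -/
import Mathlib

section
/- Let Y = [0,1] ⊂ ℝ, let F be a homeomorphism of ℝ × Y commuting with T(x,y) = (x+1,y), and let S : ℝ × Y → ℝ × Y be the reflection S(x,y) = (−x, y). If there exists l ∈ ℤ such that F(S(F(S(z)))) = z + (l, 0) for all z ∈ ℝ × Y, then l = 0; in particular F ∘ S is an involution. -/
open Filter Topology

/-- The strip `ℝ × [0,1]`. -/
abbrev StripC : Type := ℝ × ↥(Set.Icc (0 : ℝ) 1)

/-- The translation `T(x, y) = (x + 1, y)`. -/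
def deckC : StripC → StripC := fun p => (p.1 + 1, p.2)

/-- The reflection `S(x, y) = (−x, y)` of the strip. -/
def reflS : StripC → StripC := fun p => (-p.1, p.2)

theorem comm_int (F : StripC ≃ₜ StripC)
    (hcomm : ∀ p, F (deckC p) = deckC (F p)) :
    ∀ (n : ℤ) (p : StripC), F (p.1 + n, p.2) = ((F p).1 + n, (F p).2) := by
  have key : ∀ p : StripC, F (p.1 + 1, p.2) = ((F p).1 + 1, (F p).2) := by
    intro p; have := hcomm p; simpa [deckC] using this
  intro n
  induction n using Int.induction_on with
  | zero => intro p; simp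
  | succ k ih =>
      intro p
      have h1 := key (p.1 + (k : ℝ), p.2)
      have h2 := ih p
      push_cast at h2 ⊢
      simp only at h1
      rw [h2] at h1
      rw [show p.1 + ((k : ℝ) + 1) = (p.1 + (k:ℝ)) + 1 by ring, h1]
      exact Prod.ext (by ring) rfl
  | pred k ih =>
      intro p
      have h1 := key (p.1 + (-(k:ℝ) - 1), p.2)
      have h2 := ih p
      push_cast at h2 ⊢
      simp only at h1
      rw [show p.1 + (-(k:ℝ) - 1) + 1 = p.1 + -(k:ℝ) by ring, h2] at h1
      have c1 := congrArg Prod.fst h1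
      have c2 := congrArg Prod.snd h1
      simp only at c1 c2
      exact Prod.ext (by dsimp only; linarith) c2.symm

/-- If `F` is a homeomorphism of `ℝ × [0,1]` commuting with the translation
`T(x,y) = (x+1,y)` and `F ∘ S ∘ F ∘ S = T^l` for the reflection
`S(x,y) = (−x,y)` and some `l ∈ ℤ`, then `l = 0`; in particular `F ∘ S` is an
involution. -/
theorem lift_reversible_involution (F : StripC ≃ₜ StripC)
    (hcomm : ∀ p, F (deckC p) = deckC (F p))
    (l : ℤ) (hl : ∀ z : StripC, F (reflS (F (reflS z))) = (z.1 + (l : ℝ), z.2)) :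
    l = 0 ∧ ∀ z : StripC, F (reflS (F (reflS z))) = z := by
  have hint := comm_int F hcomm
  have hl0 : l = 0 := by
    set z : StripC := (0, ⟨0, by constructor <;> norm_num⟩) with hz
    -- Way A: G(z + l) where G p = F (reflS p)
    have hA : F (reflS (z.1 + (l : ℝ), z.2)) =
        ((F (reflS z)).1 + (-l : ℤ), (F (reflS z)).2) := by
      have : reflS ((z.1 + (l : ℝ), z.2) : StripC) =
          (((reflS z).1 + ((-l : ℤ) : ℝ)), (reflS z).2) := by
        simp only [reflS]; push_cast
        exact Prod.ext (by dsimp only; ring) rfl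
      rw [this, hint (-l) (reflS z)]
    -- Way B: hl at F (reflS z)
    have hB := hl (F (reflS z))
    -- G(G(G z)) = G (z + l) by applying G to hl z
    have hC : F (reflS (F (reflS (F (reflS z))))) = F (reflS (z.1 + (l:ℝ), z.2)) := by
      rw [hl z]
    rw [hB, hA] at hC
    have h1 : (F (reflS z)).1 + (l : ℝ) = (F (reflS z)).1 + ((-l : ℤ) : ℝ) := by
      exact congrArg Prod.fst hC
    have : (l : ℝ) = ((-l : ℤ) : ℝ) := by linarith [h1]
    push_cast at this
    have : (l : ℝ) = 0 := by linarith
    exact_mod_cast this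
  refine ⟨hl0, fun z => ?_⟩
  have := hl z
  rw [hl0] at this
  simpa using this
end

section
/- Let F be a homeomorphism of the strip ℝ × (0,1) commuting with T(x,y) = (x+1,y), and suppose that F maps the vertical segment {0} × (0,1) into the open right half {(x,y) : x > 0} and maps {(x,y) : x > 0} into itself. Then for every z̃ ∈ ℝ × (0,1) and every n ≥ 1, p₁(F^[n](z̃)) > p₁(z̃) − 1. Consequently, if F is a lift of a homeomorphism f of the open annulus (ℝ/ℤ) × (0,1), then every positively recurrent point of f that has a rotation number ρ for F satisfies ρ ≥ 0. -/
open Filter Topology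

/-- The circle `ℝ/ℤ`. -/
abbrev Circle1 : Type := AddCircle (1 : ℝ)

/-- The open annulus `(ℝ/ℤ) × (0,1)`. -/
abbrev AnnO : Type := Circle1 × ↥(Set.Ioo (0 : ℝ) 1)

/-- The universal covering space `ℝ × (0,1)` of the open annulus. -/
abbrev StripO : Type := ℝ × ↥(Set.Ioo (0 : ℝ) 1)

/-- The covering map `π(x, y) = (x mod 1, y)`. -/
noncomputable def projO : StripO → AnnO := fun p => ((p.1 : Circle1), p.2)

/-- The deck transformation `T(x, y) = (x + 1, y)`. -/
def deckO : StripO → StripO := fun p => (p.1 + 1, p.2)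

/-- `z` is positively recurrent for `f`. -/
def PosRecurrentO (f : AnnO → AnnO) (z : AnnO) : Prop :=
  ∀ U ∈ 𝓝 z, ∀ N : ℕ, ∃ n ≥ N, f^[n] z ∈ U

/-- The positively recurrent point `z` has rotation number `ρ` for the lift `F`. -/
def HasRotNumO (f : AnnO → AnnO) (F : StripO → StripO) (z : AnnO) (ρ : ℝ) : Prop :=
  ∀ zt : StripO, projO zt = z →
    ∀ n : ℕ → ℕ, StrictMono n → (∀ j, 0 < n j) →
      Tendsto (fun j => f^[n j] z) atTop (𝓝 z) →
      Tendsto (fun j => ((F^[n j] zt).1 - zt.1) / (n j : ℝ)) atTop (𝓝 ρ)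

/-- If a homeomorphism `F` of the strip `ℝ × (0,1)` commutes with the
translation `T(x,y) = (x+1,y)`, maps the segment `{0} × (0,1)` into the open
right half-plane, and maps the open right half-plane into itself, then every
forward orbit drifts to the right: `p₁(F^[n](z̃)) > p₁(z̃) − 1` for `n ≥ 1`.
Consequently, if `F` is a lift of a homeomorphism `f` of the open annulus, then
every positively recurrent point of `f` having a rotation number `ρ` for `F`
satisfies `ρ ≥ 0`. -/
theorem strip_drift_right (F : StripO ≃ₜ StripO)
    (hcomm : ∀ p, F (deckO p) = deckO (F p))
    (hseg : ∀ y : ↥(Set.Ioo (0 : ℝ) 1), 0 < (F (0, y)).1)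
    (hhalf : ∀ p : StripO, 0 < p.1 → 0 < (F p).1) :
    (∀ zt : StripO, ∀ n : ℕ, 1 ≤ n → zt.1 - 1 < ((⇑F)^[n] zt).1) ∧
      (∀ f : AnnO ≃ₜ AnnO, (∀ p, projO (F p) = f (projO p)) →
        ∀ z : AnnO, ∀ ρ : ℝ, PosRecurrentO f z → HasRotNumO f F z ρ → 0 ≤ ρ) := by
  -- commutation with natural translations
  have hN : ∀ (m : ℕ) (p : StripO), F (p.1 + m, p.2) = ((F p).1 + m, (F p).2) := by
    intro m
    induction m with
    | zero => intro p; simp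
    | succ m ih =>
        intro p
        have h1 := hcomm (p.1 + (m : ℝ), p.2)
        simp only [deckO] at h1
        have h2 : (p.1 + (m : ℝ) + 1) = p.1 + ((m + 1 : ℕ) : ℝ) := by push_cast; ring
        rw [h2, ih p] at h1
        rw [h1]
        push_cast
        ring_nf
  -- commutation with integer translations
  have hC : ∀ (k : ℤ) (p : StripO), F (p.1 + k, p.2) = ((F p).1 + k, (F p).2) := by
    intro k p
    rcases le_or_gt 0 k with hk | hk
    · obtain ⟨m, rfl⟩ := Int.eq_ofNat_of_zero_le hk
      exact_mod_cast hN m p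
    · obtain ⟨m, rfl⟩ : ∃ m : ℕ, k = -(m : ℤ) := by
        refine ⟨k.natAbs, ?_⟩
        omega
      set r : StripO := (p.1 - (m : ℝ), p.2) with hr
      have h1 : F (r.1 + m, r.2) = ((F r).1 + m, (F r).2) := hN m r
      have h2 : (r.1 + (m : ℝ), r.2) = p := by
        rw [Prod.ext_iff]
        exact ⟨by simp [hr], rfl⟩
      rw [h2] at h1
      have h3 : (F r).1 = (F p).1 - m := by
        have := congrArg Prod.fst h1
        simp at this
        linarith
      have h4 : (F r).2 = (F p).2 := (congrArg Prod.snd h1).symm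
      have h5 : (p.1 + ((-(m:ℕ) : ℤ) : ℝ), p.2) = r := by
        rw [Prod.ext_iff]
        exact ⟨by simp only [hr]; push_cast; ring, rfl⟩
      rw [h5, Prod.ext_iff]
      refine ⟨?_, h4⟩
      rw [h3]
      push_cast
      ring
  -- if p.1 ≥ 0 then (F p).1 > 0
  have hB : ∀ p : StripO, 0 ≤ p.1 → 0 < (F p).1 := by
    intro p hp
    rcases eq_or_lt_of_le hp with h | h
    · have hp' : p = (0, p.2) := by
        rw [Prod.ext_iff]; exact ⟨h.symm, rfl⟩
      rw [hp']
      exact hseg p.2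
    · exact hhalf p h
  -- if p.1 ≥ k then (F p).1 > k
  have hD : ∀ (k : ℤ) (p : StripO), (k : ℝ) ≤ p.1 → (k : ℝ) < (F p).1 := by
    intro k p hp
    set q : StripO := (p.1 - k, p.2) with hq
    have h1 : F (q.1 + k, q.2) = ((F q).1 + k, (F q).2) := hC k q
    have h2 : (q.1 + (k : ℝ), q.2) = p := by
      rw [Prod.ext_iff]
      exact ⟨by simp [hq], rfl⟩
    rw [h2] at h1
    have h3 : 0 < (F q).1 := hB q (by simp [hq]; linarith)
    have h4 : (F p).1 = (F q).1 + k := by rw [h1]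
    linarith
  -- main drift statement
  have hmain : ∀ zt : StripO, ∀ n : ℕ, 1 ≤ n → zt.1 - 1 < ((⇑F)^[n] zt).1 := by
    intro zt n hn
    have key : ∀ n : ℕ, 1 ≤ n → ((⌊zt.1⌋ : ℝ)) < ((⇑F)^[n] zt).1 := by
      intro n hn
      induction n with
      | zero => omega
      | succ m ih =>
          rcases Nat.eq_or_lt_of_le hn with h | h
          · have : (⇑F)^[m+1] zt = F zt := by
              have : m = 0 := by omega
              subst this
              simp
            rw [this]
            exact hD ⌊zt.1⌋ zt (Int.floor_le _)
          · have hm : 1 ≤ m := by omega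
            have ihm := ih hm
            have : (⇑F)^[m+1] zt = F ((⇑F)^[m] zt) := Function.iterate_succ_apply' _ _ _
            rw [this]
            exact hD ⌊zt.1⌋ _ (le_of_lt ihm)
    have := key n hn
    have hfl : zt.1 - 1 < (⌊zt.1⌋ : ℝ) := Int.sub_one_lt_floor _
    linarith
  refine ⟨hmain, ?_⟩
  intro f hlift z ρ hrec hrot
  -- pick a lift of z
  obtain ⟨x, hx⟩ : ∃ x : ℝ, ((x : ℝ) : Circle1) = z.1 := by
    obtain ⟨x, hx⟩ := QuotientAddGroup.mk_surjective z.1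
    exact ⟨x, hx⟩
  set zt : StripO := (x, z.2) with hzt
  have hproj : projO zt = z := by
    simp only [projO, hzt]
    rw [Prod.ext_iff]
    exact ⟨hx, rfl⟩
  -- antitone basis of neighborhoods
  obtain ⟨U, hU⟩ := (𝓝 z).exists_antitone_basis
  -- extraction of a strictly monotone recurrence sequence
  have hfreq : ∀ j : ℕ, ∃ᶠ k in atTop, (0 < k ∧ f^[k] z ∈ U j) := by
    intro j
    rw [frequently_atTop]
    intro a
    obtain ⟨n, hn1, hn2⟩ := hrec (U j) (hU.mem j) (a + 1)
    exact ⟨n, by omega, by omega, hn2⟩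
  obtain ⟨φ, hφmono, hφ⟩ := Filter.extraction_forall_of_frequently hfreq
  have hpos : ∀ j, 0 < φ j := fun j => (hφ j).1
  have htendz : Tendsto (fun j => f^[φ j] z) atTop (𝓝 z) :=
    hU.tendsto (fun j => (hφ j).2)
  have htend := hrot zt hproj φ hφmono hpos htendz
  -- conclude ρ ≥ 0
  have hφtop : Tendsto (fun j => (φ j : ℝ)) atTop atTop :=
    tendsto_natCast_atTop_atTop.comp hφmono.tendsto_atTop
  have hlow : Tendsto (fun j => -((φ j : ℝ))⁻¹) atTop (𝓝 0) := by
    rw [show (0 : ℝ) = -0 by ring]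
    exact (tendsto_inv_atTop_zero.comp hφtop).neg
  refine le_of_tendsto_of_tendsto' hlow htend ?_
  intro j
  have hjpos : (0 : ℝ) < (φ j : ℝ) := by exact_mod_cast hpos j
  have hd : zt.1 - 1 < ((⇑F)^[φ j] zt).1 := hmain zt (φ j) (hpos j)
  have : (-1 : ℝ) ≤ ((⇑F)^[φ j] zt).1 - zt.1 := by linarith
  have h2 : (-1 : ℝ) / (φ j : ℝ) ≤ (((⇑F)^[φ j] zt).1 - zt.1) / (φ j : ℝ) := by
    gcongr
  calc -((φ j : ℝ))⁻¹ = (-1 : ℝ) / (φ j : ℝ) := by ring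
    _ ≤ _ := h2
end
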